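/- Let S be a compact topological semigroup that is generated (topologically) by a regular J-class J having only finitely many H-classes. Then J is a clopen subset of S. -/

import Mathlib

/-- Green's quasi-order ≤_R : s ≤_R t iff sS¹ ⊆ tS¹, i.e. s ∈ tS¹. -/
def leR {S : Type*} [Semigroup S] (s t : S) : Prop := s = t ∨ ∃ x, s = t * x

/-- Green's quasi-order ≤_L : s ≤_L t iff S¹s ⊆ S¹t, i.e. s ∈ S¹t. -/
def leL {S : Type*} [Semigroup S] (s t : S) : Prop := s = t ∨ ∃ x, s = x * t

/-- Green's quasi-order ≤_J : s ≤_J t iff S¹sS¹ ⊆ S¹tS¹, i.e. s ∈ S¹tS¹. -/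
def leJ {S : Type*} [Semigroup S] (s t : S) : Prop :=
  s = t ∨ (∃ x, s = x * t) ∨ (∃ y, s = t * y) ∨ ∃ x y, s = x * t * y

/-- Green's equivalence R. -/
def eqR {S : Type*} [Semigroup S] (s t : S) : Prop := leR s t ∧ leR t s

/-- Green's equivalence L. -/
def eqL {S : Type*} [Semigroup S] (s t : S) : Prop := leL s t ∧ leL t s

/-- Green's equivalence J. -/
def eqJ {S : Type*} [Semigroup S] (s t : S) : Prop := leJ s t ∧ leJ t s

namespace Stmt6Aux

variable {S : Type*} [Semigroup S]

lemma leJ_refl (a : S) : leJ a a := Or.inl rfl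

lemma leR_leJ {a b : S} (h : leR a b) : leJ a b :=
  h.elim Or.inl (fun ⟨c, hc⟩ => Or.inr (Or.inr (Or.inl ⟨c, hc⟩)))

lemma leL_leJ {a b : S} (h : leL a b) : leJ a b :=
  h.elim Or.inl (fun ⟨c, hc⟩ => Or.inr (Or.inl ⟨c, hc⟩))

lemma leJ_mul_left (a b : S) : leJ (a * b) b := Or.inr (Or.inl ⟨a, rfl⟩)

lemma leJ_mul_right (a b : S) : leJ (a * b) a := Or.inr (Or.inr (Or.inl ⟨b, rfl⟩))

lemma leJ_trans {a b c : S} (h1 : leJ a b) (h2 : leJ b c) : leJ a c := by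
  rcases h1 with rfl | ⟨x, rfl⟩ | ⟨y, rfl⟩ | ⟨x, y, rfl⟩ <;>
    rcases h2 with rfl | ⟨u, rfl⟩ | ⟨v, rfl⟩ | ⟨u, v, rfl⟩
  · exact Or.inl rfl
  · exact Or.inr (Or.inl ⟨u, rfl⟩)
  · exact Or.inr (Or.inr (Or.inl ⟨v, rfl⟩))
  · exact Or.inr (Or.inr (Or.inr ⟨u, v, rfl⟩))
  · exact Or.inr (Or.inl ⟨x, rfl⟩)
  · exact Or.inr (Or.inl ⟨x * u, by simp [mul_assoc]⟩)
  · exact Or.inr (Or.inr (Or.inr ⟨x, v, by simp [mul_assoc]⟩))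
  · exact Or.inr (Or.inr (Or.inr ⟨x * u, v, by simp [mul_assoc]⟩))
  · exact Or.inr (Or.inr (Or.inl ⟨y, rfl⟩))
  · exact Or.inr (Or.inr (Or.inr ⟨u, y, rfl⟩))
  · exact Or.inr (Or.inr (Or.inl ⟨v * y, by simp [mul_assoc]⟩))
  · exact Or.inr (Or.inr (Or.inr ⟨u, v * y, by simp [mul_assoc]⟩))
  · exact Or.inr (Or.inr (Or.inr ⟨x, y, rfl⟩))
  · exact Or.inr (Or.inr (Or.inr ⟨x * u, y, by simp [mul_assoc]⟩))
  · exact Or.inr (Or.inr (Or.inr ⟨x, v * y, by simp [mul_assoc]⟩))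
  · exact Or.inr (Or.inr (Or.inr ⟨x * u, v * y, by simp [mul_assoc]⟩))

lemma eqJ_trans {a b c : S} (h1 : eqJ a b) (h2 : eqJ b c) : eqJ a c :=
  ⟨leJ_trans h1.1 h2.1, leJ_trans h2.2 h1.2⟩

lemma eqJ_of_eqR {a b : S} (h : eqR a b) : eqJ a b :=
  ⟨leR_leJ h.1, leR_leJ h.2⟩

variable [TopologicalSpace S] [CompactSpace S] [T2Space S] [ContinuousMul S]

lemma isClosed_setmul {A B : Set S} (hA : IsCompact A) (hB : IsCompact B) :
    IsClosed ((fun p : S × S => p.1 * p.2) '' (A ×ˢ B)) :=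
  ((hA.prod hB).image continuous_mul).isClosed

lemma isClosed_right_div (s : S) : IsClosed {x : S | ∃ a, a * x = s} := by
  have h : {x : S | ∃ a, a * x = s} = Prod.snd '' {p : S × S | p.1 * p.2 = s} := by
    ext x
    constructor
    · rintro ⟨a, ha⟩; exact ⟨(a, x), ha, rfl⟩
    · rintro ⟨⟨a, y⟩, hp, rfl⟩; exact ⟨a, hp⟩
  rw [h]
  have hc : IsClosed {p : S × S | p.1 * p.2 = s} := isClosed_eq continuous_mul continuous_const
  exact (hc.isCompact.image continuous_snd).isClosed

lemma isClosed_left_div (s : S) : IsClosed {x : S | ∃ b, x * b = s} := by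
  have h : {x : S | ∃ b, x * b = s} = Prod.fst '' {p : S × S | p.1 * p.2 = s} := by
    ext x
    constructor
    · rintro ⟨b, hb⟩; exact ⟨(x, b), hb, rfl⟩
    · rintro ⟨⟨y, b⟩, hp, rfl⟩; exact ⟨b, hp⟩
  rw [h]
  have hc : IsClosed {p : S × S | p.1 * p.2 = s} := isClosed_eq continuous_mul continuous_const
  exact (hc.isCompact.image continuous_fst).isClosed

lemma isClosed_leR_below (s : S) : IsClosed {x : S | leR x s} := by
  have h : {x : S | leR x s} = {s} ∪ (fun c => s * c) '' Set.univ := by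
    ext x
    simp only [leR, Set.mem_setOf_eq, Set.mem_union, Set.mem_singleton_iff, Set.image_univ,
      Set.mem_range]
    exact Iff.rfl.or (by tauto)
  rw [h]
  exact isClosed_singleton.union
    ((isCompact_univ.image (continuous_mul_left s)).isClosed)

lemma isClosed_leR_above (s : S) : IsClosed {x : S | leR s x} := by
  have h : {x : S | leR s x} = {s} ∪ {x : S | ∃ b, x * b = s} := by
    ext x
    simp only [leR, Set.mem_setOf_eq, Set.mem_union, Set.mem_singleton_iff]
    constructor
    · rintro (rfl | ⟨b, hb⟩)
      · exact Or.inl rfl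
      · exact Or.inr ⟨b, hb.symm⟩
    · rintro (rfl | ⟨b, hb⟩)
      · exact Or.inl rfl
      · exact Or.inr ⟨b, hb.symm⟩
  rw [h]
  exact isClosed_singleton.union (isClosed_left_div s)

lemma isClosed_leL_below (s : S) : IsClosed {x : S | leL x s} := by
  have h : {x : S | leL x s} = {s} ∪ (fun c => c * s) '' Set.univ := by
    ext x
    simp only [leL, Set.mem_setOf_eq, Set.mem_union, Set.mem_singleton_iff, Set.image_univ,
      Set.mem_range]
    exact Iff.rfl.or (by tauto)
  rw [h]
  exact isClosed_singleton.union
    ((isCompact_univ.image (continuous_mul_right s)).isClosed)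

lemma isClosed_leL_above (s : S) : IsClosed {x : S | leL s x} := by
  have h : {x : S | leL s x} = {s} ∪ {x : S | ∃ a, a * x = s} := by
    ext x
    simp only [leL, Set.mem_setOf_eq, Set.mem_union, Set.mem_singleton_iff]
    constructor
    · rintro (rfl | ⟨b, hb⟩)
      · exact Or.inl rfl
      · exact Or.inr ⟨b, hb.symm⟩
    · rintro (rfl | ⟨b, hb⟩)
      · exact Or.inl rfl
      · exact Or.inr ⟨b, hb.symm⟩
  rw [h]
  exact isClosed_singleton.union (isClosed_right_div s)

lemma isClosed_H (s : S) : IsClosed {x : S | eqR x s ∧ eqL x s} := by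
  have h : {x : S | eqR x s ∧ eqL x s} =
      ({x : S | leR x s} ∩ {x : S | leR s x}) ∩
      ({x : S | leL x s} ∩ {x : S | leL s x}) := by
    ext x
    simp only [eqR, eqL, Set.mem_setOf_eq, Set.mem_inter_iff]
  rw [h]
  exact ((isClosed_leR_below s).inter (isClosed_leR_above s)).inter
    ((isClosed_leL_below s).inter (isClosed_leL_above s))

/-- Core compactness lemma: if `a = x * a * c` then there are `w` in the closure of the
subsemigroup generated by `x` and `f` in the closure of the subsemigroup generated by `c`
with `w * a = a` and `a * f = a`. -/
lemma core (a x c : S) (h : a = x * a * c) :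
    (∃ w ∈ closure ((Subsemigroup.closure {x} : Subsemigroup S) : Set S), w * a = a) ∧
    (∃ f ∈ closure ((Subsemigroup.closure {c} : Subsemigroup S) : Set S), a * f = a) := by
  haveI : CompactSpace Sᵐᵒᵖ := MulOpposite.opHomeomorph.compactSpace
  let M := S × Sᵐᵒᵖ
  let K : Subsemigroup M := Subsemigroup.closure {(x, MulOpposite.op c)}
  let T : Set M := closure (K : Set M)
  have hgenK : (x, MulOpposite.op c) ∈ K := Subsemigroup.subset_closure rfl
  have hTne : T.Nonempty := ⟨(x, MulOpposite.op c), subset_closure hgenK⟩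
  have hTcomp : IsCompact T := isClosed_closure.isCompact
  have hTmul : ∀ p ∈ T, ∀ q ∈ T, p * q ∈ T := fun p hp q hq =>
    K.topologicalClosure.mul_mem hp hq
  obtain ⟨m, hmT, hmm⟩ := exists_idempotent_in_compact_subsemigroup
    (fun r => continuous_mul_right r) T hTne hTcomp hTmul
  -- every element of T satisfies p.1 * a * (unop p.2) = a
  have hZ : T ⊆ {p : M | p.1 * a * (MulOpposite.unop p.2) = a} := by
    apply closure_minimal
    · intro p hp
      induction hp using Subsemigroup.closure_induction with
      | mem p hp =>
        rcases hp with rfl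
        exact h.symm
      | mul p q hp hq ihp ihq =>
        show (p.1 * q.1) * a * (MulOpposite.unop q.2 * MulOpposite.unop p.2) = a
        calc (p.1 * q.1) * a * (MulOpposite.unop q.2 * MulOpposite.unop p.2)
            = p.1 * (q.1 * a * MulOpposite.unop q.2) * MulOpposite.unop p.2 := by
              simp [mul_assoc]
          _ = p.1 * a * MulOpposite.unop p.2 := by rw [ihq]
          _ = a := ihp
    · exact isClosed_eq (f := fun p : S × Sᵐᵒᵖ => p.1 * a * MulOpposite.unop p.2)
        ((continuous_fst.mul continuous_const).mul
          (MulOpposite.continuous_unop.comp continuous_snd)) continuous_const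
  have hma : m.1 * a * MulOpposite.unop m.2 = a := hZ hmT
  have hm1 : m.1 * m.1 = m.1 := congrArg Prod.fst hmm
  have hm2 : m.2 * m.2 = m.2 := congrArg Prod.snd hmm
  have hm2' : MulOpposite.unop m.2 * MulOpposite.unop m.2 = MulOpposite.unop m.2 := by
    have := congrArg MulOpposite.unop hm2
    simpa using this
  have hwa : m.1 * a = a := by
    conv_lhs => rw [← hma]
    calc m.1 * (m.1 * a * MulOpposite.unop m.2)
        = (m.1 * m.1) * a * MulOpposite.unop m.2 := by simp [mul_assoc]
      _ = m.1 * a * MulOpposite.unop m.2 := by rw [hm1]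
      _ = a := hma
  have haf : a * MulOpposite.unop m.2 = a := by
    conv_lhs => rw [← hma]
    calc (m.1 * a * MulOpposite.unop m.2) * MulOpposite.unop m.2
        = m.1 * a * (MulOpposite.unop m.2 * MulOpposite.unop m.2) := by simp [mul_assoc]
      _ = m.1 * a * MulOpposite.unop m.2 := by rw [hm2']
      _ = a := hma
  constructor
  · refine ⟨m.1, ?_, hwa⟩
    have hsub : Prod.fst '' (K : Set M) ⊆
        ((Subsemigroup.closure {x} : Subsemigroup S) : Set S) := by
      rintro _ ⟨p, hp, rfl⟩
      induction hp using Subsemigroup.closure_induction with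
      | mem p hp => rcases hp with rfl; exact Subsemigroup.subset_closure rfl
      | mul p q hp hq ihp ihq => exact Subsemigroup.mul_mem _ ihp ihq
    have : m.1 ∈ Prod.fst '' T := ⟨m, hmT, rfl⟩
    have h2 : Prod.fst '' T ⊆ closure (Prod.fst '' (K : Set M)) :=
      image_closure_subset_closure_image continuous_fst
    exact closure_mono hsub (h2 this)
  · refine ⟨MulOpposite.unop m.2, ?_, haf⟩
    have hsub : (fun p : M => MulOpposite.unop p.2) '' (K : Set M) ⊆
        ((Subsemigroup.closure {c} : Subsemigroup S) : Set S) := by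
      rintro _ ⟨p, hp, rfl⟩
      induction hp using Subsemigroup.closure_induction with
      | mem p hp => rcases hp with rfl; exact Subsemigroup.subset_closure rfl
      | mul p q hp hq ihp ihq =>
        show MulOpposite.unop q.2 * MulOpposite.unop p.2 ∈ _
        exact Subsemigroup.mul_mem _ ihq ihp
    have hcont : Continuous (fun p : M => MulOpposite.unop p.2) :=
      MulOpposite.continuous_unop.comp continuous_snd
    have : MulOpposite.unop m.2 ∈ (fun p : M => MulOpposite.unop p.2) '' T := ⟨m, hmT, rfl⟩
    have h2 : (fun p : M => MulOpposite.unop p.2) '' T ⊆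
        closure ((fun p : M => MulOpposite.unop p.2) '' (K : Set M)) :=
      image_closure_subset_closure_image hcont
    exact closure_mono hsub (h2 this)

/-- Auxiliary absorption lemma (right version). -/
lemma absorb_auxR (a b x c : S) (h : a = x * a * c)
    (hstart : a * c = a * b ∨ ∃ z, a * c = a * b * z) : leR a (a * b) := by
  set Kset : Set S := {a * b} ∪ (fun z => a * b * z) '' Set.univ with hKdef
  have hKcl : IsClosed Kset :=
    isClosed_singleton.union ((isCompact_univ.image (continuous_mul_left (a * b))).isClosed)
  obtain ⟨-, f, hf, haf⟩ := core a x c h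
  have hmem : ∀ z ∈ (Subsemigroup.closure {c} : Subsemigroup S), a * z ∈ Kset := by
    intro z hz
    induction hz using Subsemigroup.closure_induction with
    | mem z hz =>
      rcases hz with rfl
      rcases hstart with h1 | ⟨w, h1⟩
      · exact Or.inl h1
      · exact Or.inr ⟨w, trivial, h1.symm⟩
    | mul z1 z2 hz1 hz2 ih1 ih2 =>
      have : a * (z1 * z2) = (a * z1) * z2 := (mul_assoc a z1 z2).symm
      rw [this]
      rcases ih1 with h1 | ⟨w, -, h1⟩
      · rw [Set.mem_singleton_iff.mp h1]
        exact Or.inr ⟨z2, trivial, rfl⟩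
      · rw [← h1]
        exact Or.inr ⟨w * z2, trivial, by simp [mul_assoc]⟩
  have haK : a ∈ Kset := by
    have h1 : a * f ∈ (fun y => a * y) '' closure
        ((Subsemigroup.closure {c} : Subsemigroup S) : Set S) := ⟨f, hf, rfl⟩
    have h2 : (fun y => a * y) '' closure
        ((Subsemigroup.closure {c} : Subsemigroup S) : Set S) ⊆
        closure ((fun y => a * y) '' ((Subsemigroup.closure {c} : Subsemigroup S) : Set S)) :=
      image_closure_subset_closure_image (continuous_mul_left a)
    have h3 : (fun y => a * y) '' ((Subsemigroup.closure {c} : Subsemigroup S) : Set S) ⊆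
        Kset := by rintro _ ⟨z, hz, rfl⟩; exact hmem z hz
    have := closure_mono h3 (h2 h1)
    rw [hKcl.closure_eq] at this
    rwa [haf] at this
  rcases haK with h1 | ⟨w, -, h1⟩
  · exact Or.inl (Set.mem_singleton_iff.mp h1)
  · exact Or.inr ⟨w, h1.symm⟩

/-- Auxiliary absorption lemma (left version). -/
lemma absorb_auxL (a b x c : S) (h : a = x * a * c)
    (hstart : x * a = b * a ∨ ∃ z, x * a = z * (b * a)) : leL a (b * a) := by
  set Kset : Set S := {b * a} ∪ (fun z => z * (b * a)) '' Set.univ with hKdef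
  have hKcl : IsClosed Kset :=
    isClosed_singleton.union ((isCompact_univ.image (continuous_mul_right (b * a))).isClosed)
  obtain ⟨⟨w, hw, hwa⟩, -⟩ := core a x c h
  have hmem : ∀ z ∈ (Subsemigroup.closure {x} : Subsemigroup S), z * a ∈ Kset := by
    intro z hz
    induction hz using Subsemigroup.closure_induction with
    | mem z hz =>
      rcases hz with rfl
      rcases hstart with h1 | ⟨v, h1⟩
      · exact Or.inl h1
      · exact Or.inr ⟨v, trivial, h1.symm⟩
    | mul z1 z2 hz1 hz2 ih1 ih2 =>
      have : (z1 * z2) * a = z1 * (z2 * a) := mul_assoc z1 z2 a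
      rw [this]
      rcases ih2 with h2 | ⟨v, -, h2⟩
      · rw [Set.mem_singleton_iff.mp h2]
        exact Or.inr ⟨z1, trivial, rfl⟩
      · rw [← h2]
        exact Or.inr ⟨z1 * v, trivial, by simp [mul_assoc]⟩
  have haK : a ∈ Kset := by
    have h1 : w * a ∈ (fun y => y * a) '' closure
        ((Subsemigroup.closure {x} : Subsemigroup S) : Set S) := ⟨w, hw, rfl⟩
    have h2 : (fun y => y * a) '' closure
        ((Subsemigroup.closure {x} : Subsemigroup S) : Set S) ⊆
        closure ((fun y => y * a) '' ((Subsemigroup.closure {x} : Subsemigroup S) : Set S)) :=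
      image_closure_subset_closure_image (continuous_mul_right a)
    have h3 : (fun y => y * a) '' ((Subsemigroup.closure {x} : Subsemigroup S) : Set S) ⊆
        Kset := by rintro _ ⟨z, hz, rfl⟩; exact hmem z hz
    have := closure_mono h3 (h2 h1)
    rw [hKcl.closure_eq] at this
    rwa [hwa] at this
  rcases haK with h1 | ⟨v, -, h1⟩
  · exact Or.inl (Set.mem_singleton_iff.mp h1)
  · exact Or.inr ⟨v, h1.symm⟩

/-- Stability (right version): if `a ≤_J a*b` then `a ≤_R a*b`. -/
lemma stabR {a b : S} (h : leJ a (a * b)) : leR a (a * b) := by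
  rcases h with h | ⟨x, hx⟩ | ⟨y, hy⟩ | ⟨x, y, hxy⟩
  · exact Or.inl h
  · -- a = x * (a * b)
    have h' : a = x * a * b := hx.trans (mul_assoc x a b).symm
    exact absorb_auxR a b x b h' (Or.inl rfl)
  · exact Or.inr ⟨y, hy⟩
  · -- a = x * (a * b) * y
    have h' : a = x * a * (b * y) := hxy.trans (by simp [mul_assoc])
    exact absorb_auxR a b x (b * y) h' (Or.inr ⟨y, (mul_assoc a b y).symm⟩)

/-- Stability (left version): if `a ≤_J b*a` then `a ≤_L b*a`. -/
lemma stabL {a b : S} (h : leJ a (b * a)) : leL a (b * a) := by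
  rcases h with h | ⟨x, hx⟩ | ⟨y, hy⟩ | ⟨x, y, hxy⟩
  · exact Or.inl h
  · exact Or.inr ⟨x, hx⟩
  · -- a = (b * a) * y
    have h' : a = b * a * y := hy
    exact absorb_auxL a b b y h' (Or.inl rfl)
  · -- a = x * (b * a) * y
    have h' : a = (x * b) * a * y := hxy.trans (by simp [mul_assoc])
    exact absorb_auxL a b (x * b) y h' (Or.inr ⟨x, (mul_assoc x b a)⟩)

/-- Claim 1: if `s*u ∈ J` and `u' ≤_R u` with `u' ∈ J` then `s*u' ∈ J`. -/
lemma claim1 (t s u u' : S) (hu : eqJ u t) (hsu : eqJ (s * u) t)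
    (huR : leR u' u) (hu'J : eqJ u' t) : eqJ (s * u') t := by
  have hLu : leL u (s * u) := stabL (leJ_trans hu.1 hsu.2)
  rcases huR with rfl | ⟨c, rfl⟩
  · exact hsu
  · -- u' = u * c, s * u' = (s * u) * c
    have hkey : s * (u * c) = (s * u) * c := (mul_assoc s u c).symm
    have hle : leJ (u * c) (s * (u * c)) := by
      rcases hLu with h1 | ⟨z, h1⟩
      · refine Or.inl ?_
        rw [hkey, ← h1]
      · refine Or.inr (Or.inl ⟨z, ?_⟩)
        rw [hkey]
        calc u * c = (z * (s * u)) * c := by rw [← h1]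
          _ = z * ((s * u) * c) := mul_assoc _ _ _
    constructor
    · exact leJ_trans (leJ_mul_left s (u * c)) hu'J.1
    · exact leJ_trans hu'J.2 hle

/-- Claim 2: if `s*u ∈ J` and `s' ≤_L s` with `s' ∈ J` then `s'*u ∈ J`. -/
lemma claim2 (t s u s' : S) (hs : eqJ s t) (hu : eqJ u t) (hsu : eqJ (s * u) t)
    (hsL : leL s' s) (hs'J : eqJ s' t) : eqJ (s' * u) t := by
  have hRs : leR s (s * u) := stabR (leJ_trans hs.1 hsu.2)
  rcases hsL with rfl | ⟨a, rfl⟩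
  · exact hsu
  · have hkey : (a * s) * u = a * (s * u) := mul_assoc a s u
    have hle : leJ (a * s) ((a * s) * u) := by
      rcases hRs with h1 | ⟨w, h1⟩
      · refine Or.inl ?_
        rw [hkey, ← h1]
      · refine Or.inr (Or.inr (Or.inl ⟨w, ?_⟩))
        rw [hkey]
        calc a * s = a * ((s * u) * w) := by rw [← h1]
          _ = (a * (s * u)) * w := (mul_assoc _ _ _).symm
    constructor
    · exact leJ_trans (leJ_mul_left (a * s) u) hu.1
    · exact leJ_trans hs'J.2 hle

/-- `s*u ∈ J` only depends on the H-classes of `s` and `u`. -/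
lemma hinv (t s u s' u' : S) (hs : eqJ s t) (hu : eqJ u t) (hsu : eqJ (s * u) t)
    (hs' : eqR s' s ∧ eqL s' s) (hu' : eqR u' u ∧ eqL u' u) : eqJ (s' * u') t := by
  have hu'J : eqJ u' t := eqJ_trans (eqJ_of_eqR hu'.1) hu
  have hs'J : eqJ s' t := eqJ_trans (eqJ_of_eqR hs'.1) hs
  have h1 : eqJ (s * u') t := claim1 t s u u' hu hsu hu'.1.1 hu'J
  exact claim2 t s u' s' hs hu'J h1 hs'.2.1 hs'J

end Stmt6Aux

open Stmt6Aux in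
/-- Let S be a compact topological semigroup topologically
generated by a regular J-class J having only finitely many H-classes.
Then J is clopen. -/
theorem stmt_6 {S : Type*} [Semigroup S] [TopologicalSpace S] [CompactSpace S]
    [T2Space S] [ContinuousMul S] (t : S) (J : Set S)
    (hJ : J = {x : S | eqJ x t})
    (hreg : ∀ s ∈ J, ∃ x : S, s = s * x * s)
    (hfin : {H : Set S | ∃ s ∈ J, H = {x : S | eqR x s ∧ eqL x s}}.Finite)
    (hgen : closure ((Subsemigroup.closure J : Subsemigroup S) : Set S)
      = Set.univ) :
    IsClosed J ∧ IsOpen J := by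
  clear hreg
  have hJmem : ∀ {x : S}, x ∈ J ↔ eqJ x t := fun {x} => by rw [hJ]; exact Iff.rfl
  -- notation for H-classes
  set Hcl : S → Set S := fun s => {x : S | eqR x s ∧ eqL x s} with hHcl
  set F : Set (Set S) := {H : Set S | ∃ s ∈ J, H = {x : S | eqR x s ∧ eqL x s}} with hF
  have hFcl : ∀ H ∈ F, IsClosed H := by
    rintro H ⟨s, -, rfl⟩
    exact isClosed_H s
  have hHsubJ : ∀ s ∈ J, Hcl s ⊆ J := by
    intro s hs x hx
    have hxs : eqJ x s := ⟨leR_leJ hx.1.1, leR_leJ hx.1.2⟩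
    exact hJmem.mpr (eqJ_trans hxs (hJmem.mp hs))
  have hJU : J = ⋃₀ F := by
    apply Set.Subset.antisymm
    · intro x hx
      refine ⟨Hcl x, ⟨x, hx, rfl⟩, ⟨⟨Or.inl rfl, Or.inl rfl⟩, ⟨Or.inl rfl, Or.inl rfl⟩⟩⟩
    · rintro x ⟨H, ⟨s, hs, rfl⟩, hx⟩
      exact hHsubJ s hs hx
  have hJclosed : IsClosed J := by
    rw [hJU, Set.sUnion_eq_biUnion]
    exact hfin.isClosed_biUnion hFcl
  refine ⟨hJclosed, ?_⟩
  -- the set of "bad" pairs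
  set P : Set (S × S) := {p : S × S | p.1 ∈ J ∧ p.2 ∈ J ∧ p.1 * p.2 ∉ J} with hP
  have hPclosed : IsClosed P := by
    set G : Set (Set (S × S)) :=
      {C | ∃ H1 ∈ F, ∃ H2 ∈ F, C = H1 ×ˢ H2 ∧ C ⊆ P} with hG
    have hGfin : G.Finite := by
      apply (Set.Finite.image2 (fun H1 H2 => H1 ×ˢ H2) hfin hfin).subset
      rintro C ⟨H1, h1, H2, h2, rfl, -⟩
      exact Set.mem_image2_of_mem h1 h2
    have hPG : P = ⋃₀ G := by
      apply Set.Subset.antisymm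
      · rintro ⟨s, u⟩ ⟨hsJ, huJ, hsuJ⟩
        refine ⟨Hcl s ×ˢ Hcl u, ⟨Hcl s, ⟨s, hsJ, rfl⟩, Hcl u, ⟨u, huJ, rfl⟩, rfl, ?_⟩, ?_⟩
        · rintro ⟨s', u'⟩ ⟨hs', hu'⟩
          refine ⟨hHsubJ s hsJ hs', hHsubJ u huJ hu', fun hcon => hsuJ ?_⟩
          -- from s' * u' ∈ J deduce s * u ∈ J
          have hs'' : eqR s s' ∧ eqL s s' := ⟨⟨hs'.1.2, hs'.1.1⟩, ⟨hs'.2.2, hs'.2.1⟩⟩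
          have hu'' : eqR u u' ∧ eqL u u' := ⟨⟨hu'.1.2, hu'.1.1⟩, ⟨hu'.2.2, hu'.2.1⟩⟩
          exact hJmem.mpr (hinv t s' u' s u (hJmem.mp (hHsubJ s hsJ hs'))
            (hJmem.mp (hHsubJ u huJ hu')) (hJmem.mp hcon) hs'' hu'')
        · exact ⟨⟨⟨Or.inl rfl, Or.inl rfl⟩, ⟨Or.inl rfl, Or.inl rfl⟩⟩,
            ⟨⟨Or.inl rfl, Or.inl rfl⟩, ⟨Or.inl rfl, Or.inl rfl⟩⟩⟩
      · rintro p ⟨C, ⟨H1, h1, H2, h2, rfl, hCP⟩, hp⟩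
        exact hCP hp
    rw [hPG, Set.sUnion_eq_biUnion]
    apply hGfin.isClosed_biUnion
    rintro C ⟨H1, h1, H2, h2, rfl, -⟩
    exact (hFcl H1 h1).prod (hFcl H2 h2)
  have hPcomp : IsCompact P := hPclosed.isCompact
  set mul2 : S × S → S := fun p => p.1 * p.2 with hmul2
  have hcmul2 : Continuous mul2 := continuous_mul
  set B : Set S := mul2 '' P with hB
  have hBcomp : IsCompact B := hPcomp.image hcmul2
  set BS : Set S := mul2 '' (B ×ˢ Set.univ) with hBS
  set SB : Set S := mul2 '' (Set.univ ×ˢ B) with hSB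
  set SBS : Set S := mul2 '' (Set.univ ×ˢ BS) with hSBS
  have hBScomp : IsCompact BS := (hBcomp.prod isCompact_univ).image hcmul2
  have hSBcomp : IsCompact SB := (isCompact_univ.prod hBcomp).image hcmul2
  have hSBScomp : IsCompact SBS := (isCompact_univ.prod hBScomp).image hcmul2
  set W : Set S := B ∪ (BS ∪ (SB ∪ SBS)) with hW
  have hWclosed : IsClosed W :=
    hBcomp.isClosed.union (hBScomp.isClosed.union (hSBcomp.isClosed.union hSBScomp.isClosed))
  -- W is a right ideal
  have hWr : ∀ z ∈ W, ∀ y : S, z * y ∈ W := by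
    rintro z hz y
    rcases hz with hz | hz | hz | hz
    · exact Or.inr (Or.inl ⟨(z, y), ⟨hz, trivial⟩, rfl⟩)
    · obtain ⟨⟨b, s⟩, ⟨hb, -⟩, rfl⟩ := hz
      exact Or.inr (Or.inl ⟨(b, s * y), ⟨hb, trivial⟩, (mul_assoc b s y).symm⟩)
    · obtain ⟨⟨a, b⟩, ⟨-, hb⟩, rfl⟩ := hz
      refine Or.inr (Or.inr (Or.inr ⟨(a, b * y), ⟨trivial, ?_⟩, (mul_assoc a b y).symm⟩))
      exact ⟨(b, y), ⟨hb, trivial⟩, rfl⟩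
    · obtain ⟨⟨a, w⟩, ⟨-, hw⟩, rfl⟩ := hz
      obtain ⟨⟨b, s⟩, ⟨hb, -⟩, rfl⟩ := hw
      refine Or.inr (Or.inr (Or.inr ⟨(a, b * s * y), ⟨trivial, ?_⟩, ?_⟩))
      · exact ⟨(b, s * y), ⟨hb, trivial⟩, (mul_assoc b s y).symm⟩
      · show a * (b * s * y) = a * (b * s) * y
        simp [mul_assoc]
  -- W is a left ideal
  have hWl : ∀ z ∈ W, ∀ y : S, y * z ∈ W := by
    rintro z hz y
    rcases hz with hz | hz | hz | hz
    · exact Or.inr (Or.inr (Or.inl ⟨(y, z), ⟨trivial, hz⟩, rfl⟩))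
    · obtain ⟨⟨b, s⟩, ⟨hb, -⟩, rfl⟩ := hz
      refine Or.inr (Or.inr (Or.inr ⟨(y, b * s), ⟨trivial, ?_⟩, rfl⟩))
      exact ⟨(b, s), ⟨hb, trivial⟩, rfl⟩
    · obtain ⟨⟨a, b⟩, ⟨-, hb⟩, rfl⟩ := hz
      exact Or.inr (Or.inr (Or.inl ⟨(y * a, b), ⟨trivial, hb⟩, mul_assoc y a b⟩))
    · obtain ⟨⟨a, w⟩, ⟨-, hw⟩, rfl⟩ := hz
      exact Or.inr (Or.inr (Or.inr ⟨(y * a, w), ⟨trivial, hw⟩, mul_assoc y a w⟩))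
  -- the generated subsemigroup is contained in J ∪ W
  have hsub : ((Subsemigroup.closure J : Subsemigroup S) : Set S) ⊆ J ∪ W := by
    intro x hx
    induction hx using Subsemigroup.closure_induction with
    | mem x hx => exact Or.inl hx
    | mul x y hx hy ihx ihy =>
      rcases ihx with hxJ | hxW
      · rcases ihy with hyJ | hyW
        · by_cases hxy : x * y ∈ J
          · exact Or.inl hxy
          · exact Or.inr (Or.inl ⟨(x, y), ⟨hxJ, hyJ, hxy⟩, rfl⟩)
        · exact Or.inr (hWl _ hyW x)
      · exact Or.inr (hWr _ hxW y)
  have hunion : (Set.univ : Set S) ⊆ J ∪ W := by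
    rw [← hgen]
    exact closure_minimal hsub (hJclosed.union hWclosed)
  -- J and W are disjoint
  have hdisj : ∀ x ∈ J, x ∉ W := by
    intro x hxJ hxW
    -- extract b ∈ B with x ≤_J b
    have hexb : ∃ b ∈ B, leJ x b := by
      rcases hxW with hz | hz | hz | hz
      · exact ⟨x, hz, leJ_refl x⟩
      · obtain ⟨⟨b, s⟩, ⟨hb, -⟩, rfl⟩ := hz
        exact ⟨b, hb, Or.inr (Or.inr (Or.inl ⟨s, rfl⟩))⟩
      · obtain ⟨⟨a, b⟩, ⟨-, hb⟩, rfl⟩ := hz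
        exact ⟨b, hb, Or.inr (Or.inl ⟨a, rfl⟩)⟩
      · obtain ⟨⟨a, w⟩, ⟨-, hw⟩, rfl⟩ := hz
        obtain ⟨⟨b, s⟩, ⟨hb, -⟩, rfl⟩ := hw
        exact ⟨b, hb, Or.inr (Or.inr (Or.inr ⟨a, s, (mul_assoc a b s).symm⟩))⟩
    obtain ⟨b, hbB, hxb⟩ := hexb
    obtain ⟨⟨s, u⟩, ⟨hsJ, huJ, hsuJ⟩, rfl⟩ := hbB
    apply hsuJ
    have h1 : leJ (s * u) t := leJ_trans (leJ_mul_left s u) (hJmem.mp huJ).1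
    have h2 : leJ t (s * u) := leJ_trans (hJmem.mp hxJ).2 hxb
    exact hJmem.mpr ⟨h1, h2⟩
  -- conclude openness
  have hJcompl : J = Wᶜ := by
    apply Set.Subset.antisymm
    · intro x hx
      exact hdisj x hx
    · intro x hx
      rcases hunion (Set.mem_univ x) with h | h
      · exact h
      · exact absurd h hx
  rw [hJcompl]
  exact hWclosed.isOpen_compl
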